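/- For even n ≥ 4, (0,0,1) ∈ Λ_{2^{n-2}}(X_n, Y_n, Z_n): the projection onto V' = Span{|0⟩⊗|j_1,...,j_{n-1}⟩ : Hamming weight of (j_1,...,j_{n-1}) even} has rank 2^{n-2} and satisfies P X_n P = P Y_n P = 0, P Z_n P = P. -/

import Mathlib

open Matrix Finset Complex

noncomputable def sigmaX : Matrix (Fin 2) (Fin 2) ℂ := !![0, 1; 1, 0]
noncomputable def sigmaY : Matrix (Fin 2) (Fin 2) ℂ := !![0, -Complex.I; Complex.I, 0]
noncomputable def sigmaZ : Matrix (Fin 2) (Fin 2) ℂ := !![1, 0; 0, -1]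

/-- `n`-fold Kronecker (tensor) power of a `2 × 2` matrix, acting on `ℂ^{2^n}`
indexed by bit strings. -/
noncomputable def tpow (A : Matrix (Fin 2) (Fin 2) ℂ) (n : ℕ) :
    Matrix (Fin n → Fin 2) (Fin n → Fin 2) ℂ :=
  Matrix.of fun j k => ∏ i, A (j i) (k i)

/-- The joint rank-`k` numerical range of three matrices: triples `(a₁,a₂,a₃)` such that
`P Aⱼ P = aⱼ P` for some rank-`k` orthogonal projection `P`. -/
def jointRank3 {ι : Type*} [Fintype ι] [DecidableEq ι] (k : ℕ)
    (A B C : Matrix ι ι ℂ) : Set (ℂ × ℂ × ℂ) :=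
  {t | ∃ P : Matrix ι ι ℂ, P.IsHermitian ∧ P * P = P ∧ P.rank = k ∧
    P * A * P = t.1 • P ∧ P * B * P = t.2.1 • P ∧ P * C * P = t.2.2 • P}

/-- Hamming weight: the number of indices `i` with `j i = 1`. -/
def hammingWt {n : ℕ} (j : Fin n → Fin 2) : ℕ :=
  (Finset.univ.filter fun i => j i = 1).card

lemma half_card {α : Type*} [DecidableEq α] (s : Finset α) (q : α → Prop) [DecidablePred q]
    (f : α → α) (hfs : ∀ a ∈ s, f a ∈ s) (hff : ∀ a ∈ s, f (f a) = a)
    (hq : ∀ a ∈ s, (q (f a) ↔ ¬ q a)) :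
    (s.filter q).card * 2 = s.card := by
  have h1 : (s.filter q).card = (s.filter fun a => ¬ q a).card := by
    apply Finset.card_bij' (fun a _ => f a) (fun a _ => f a)
    · intro a ha
      simp only [Finset.mem_filter] at ha ⊢
      exact ⟨hfs a ha.1, fun h => ((hq a ha.1).mp h) ha.2⟩
    · intro a ha
      simp only [Finset.mem_filter] at ha ⊢
      exact ⟨hfs a ha.1, (hq a ha.1).mpr ha.2⟩
    · intro a ha
      simp only [Finset.mem_filter] at ha
      exact hff a ha.1
    · intro a ha
      simp only [Finset.mem_filter] at ha
      exact hff a ha.1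
  have h2 := Finset.card_filter_add_card_filter_not (s := s) (p := q)
  omega

lemma hammingWt_eq_sum {n : ℕ} (j : Fin n → Fin 2) :
    hammingWt j = ∑ i, (j i).val := by
  unfold hammingWt
  rw [Finset.card_filter]
  refine Finset.sum_congr rfl fun i _ => ?_
  have : ∀ x : Fin 2, (if x = 1 then 1 else 0) = x.val := by decide
  exact this (j i)

lemma even_wt_update {n : ℕ} (j : Fin n → Fin 2) (i : Fin n) :
    Even (hammingWt (Function.update j i (j i + 1))) ↔ ¬ Even (hammingWt j) := by
  rw [hammingWt_eq_sum, hammingWt_eq_sum]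
  have h1 : ∑ x, (Function.update j i (j i + 1) x).val
      = (j i + 1).val + ∑ x ∈ Finset.univ.erase i, (j x).val := by
    rw [show (∑ x, (Function.update j i (j i + 1) x).val)
        = ∑ x, (fun x => (Function.update j i (j i + 1) x).val) x from rfl]
    rw [← Finset.add_sum_erase _ _ (Finset.mem_univ i)]
    simp only [Function.update_self]
    congr 1
    refine Finset.sum_congr rfl fun x hx => ?_
    rw [Function.update_of_ne (Finset.ne_of_mem_erase hx)]
  have h2 : ∑ x, (j x).val = (j i).val + ∑ x ∈ Finset.univ.erase i, (j x).val :=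
    (Finset.add_sum_erase _ _ (Finset.mem_univ i)).symm
  have key : ((j i + 1 : Fin 2)).val + (j i).val = 1 := by
    have : ∀ x : Fin 2, ((x + 1 : Fin 2)).val + x.val = 1 := by decide
    exact this (j i)
  rw [h1, h2]
  simp only [Nat.even_iff]
  omega
lemma sigmaZ_diag (a : Fin 2) : sigmaZ a a = if a = 1 then -1 else 1 := by
  fin_cases a <;> simp [sigmaZ]

lemma sigmaZ_off {a b : Fin 2} (h : a ≠ b) : sigmaZ a b = 0 := by
  fin_cases a <;> fin_cases b <;> simp_all [sigmaZ]

lemma sigmaX00 : sigmaX 0 0 = 0 := by simp [sigmaX]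
lemma sigmaY00 : sigmaY 0 0 = 0 := by simp [sigmaY]

/-- the predicate defining the subspace -/
def pset (n : ℕ) (h0 : 0 < n) (j : Fin n → Fin 2) : Prop :=
  j ⟨0, h0⟩ = 0 ∧ Even (hammingWt j)

instance pset.dec (n : ℕ) (h0 : 0 < n) : DecidablePred (pset n h0) := fun j =>
  inferInstanceAs (Decidable (j ⟨0, h0⟩ = 0 ∧ Even (hammingWt j)))

/-- the diagonal entries -/
noncomputable def dfun (n : ℕ) (h0 : 0 < n) (j : Fin n → Fin 2) : ℂ :=
  if pset n h0 j then 1 else 0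

lemma dfun_pos {n : ℕ} {h0 : 0 < n} {j : Fin n → Fin 2} (h : pset n h0 j) :
    dfun n h0 j = 1 := if_pos h

lemma dfun_neg {n : ℕ} {h0 : 0 < n} {j : Fin n → Fin 2} (h : ¬ pset n h0 j) :
    dfun n h0 j = 0 := if_neg h

lemma pset_count (n : ℕ) (hn : 4 ≤ n) (h0 : 0 < n) :
    (Finset.univ.filter (pset n h0)).card = 2 ^ (n - 2) := by
  have h1 : (1 : ℕ) < n := by omega
  set i0 : Fin n := ⟨0, h0⟩
  set i1 : Fin n := ⟨1, h1⟩
  have hi01 : i0 ≠ i1 := by simp [i0, i1, Fin.ext_iff]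
  have step1 : ((Finset.univ : Finset (Fin n → Fin 2)).filter
      (fun j => j i0 = 0)).card * 2 = 2 ^ n := by
    have := half_card (Finset.univ : Finset (Fin n → Fin 2))
      (fun j => j i0 = 0) (fun j => Function.update j i0 (j i0 + 1))
      (fun a _ => Finset.mem_univ _)
      (fun a _ => by
        simp only [Function.update_idem, Function.update_self]
        have h2 : ∀ x : Fin 2, x + 1 + 1 = x := by decide
        rw [h2, Function.update_eq_self])
      (fun a _ => by
        simp only [Function.update_self]
        have : ∀ x : Fin 2, (x + 1 = 0 ↔ ¬ x = 0) := by decide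
        exact this _)
    rwa [Finset.card_univ, Fintype.card_fun, Fintype.card_fin, Fintype.card_fin] at this
  have step2 : (Finset.univ.filter (pset n h0)).card * 2 =
      ((Finset.univ : Finset (Fin n → Fin 2)).filter (fun j => j i0 = 0)).card := by
    have := half_card ((Finset.univ : Finset (Fin n → Fin 2)).filter (fun j => j i0 = 0))
      (fun j => Even (hammingWt j)) (fun j => Function.update j i1 (j i1 + 1))
      (fun a ha => by
        simp only [Finset.mem_filter] at ha ⊢
        rw [Function.update_of_ne hi01]
        exact ⟨Finset.mem_univ _, ha.2⟩)
      (fun a _ => by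
        simp only [Function.update_idem, Function.update_self]
        have h2 : ∀ x : Fin 2, x + 1 + 1 = x := by decide
        rw [h2, Function.update_eq_self])
      (fun a _ => even_wt_update a i1)
    rw [Finset.filter_filter] at this
    convert this using 3
    rfl
  have hpow : 2 ^ (n - 2) * 2 * 2 = 2 ^ n := by
    rw [mul_assoc, show (2 * 2 : ℕ) = 2 ^ 2 from rfl, ← pow_add,
      Nat.sub_add_cancel (le_trans (by norm_num) hn)]
  have key : (Finset.univ.filter (pset n h0)).card * 2 * 2 = 2 ^ (n - 2) * 2 * 2 := by
    rw [step2, step1, hpow]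
  have k1 := Nat.eq_of_mul_eq_mul_right (by norm_num : (0:ℕ) < 2) key
  exact Nat.eq_of_mul_eq_mul_right (by norm_num : (0:ℕ) < 2) k1

theorem jointRank_even_codim2 (n : ℕ) (hn : 4 ≤ n) (heven : Even n) :
    (∃ P : Matrix (Fin n → Fin 2) (Fin n → Fin 2) ℂ,
      P.IsHermitian ∧ P * P = P ∧ P.rank = 2 ^ (n - 2) ∧
      LinearMap.range P.mulVecLin =
        Submodule.span ℂ
          ((fun j : Fin n → Fin 2 => (Pi.single j 1 : (Fin n → Fin 2) → ℂ)) ''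
            {j | j ⟨0, by omega⟩ = 0 ∧ Even (hammingWt j)}) ∧
      P * tpow sigmaX n * P = 0 ∧ P * tpow sigmaY n * P = 0 ∧
      P * tpow sigmaZ n * P = P) ∧
    ((0 : ℂ), (0 : ℂ), (1 : ℂ)) ∈
      jointRank3 (2 ^ (n - 2)) (tpow sigmaX n) (tpow sigmaY n) (tpow sigmaZ n) := by
  have h0 : 0 < n := by omega
  have main : (∃ P : Matrix (Fin n → Fin 2) (Fin n → Fin 2) ℂ,
      P.IsHermitian ∧ P * P = P ∧ P.rank = 2 ^ (n - 2) ∧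
      LinearMap.range P.mulVecLin =
        Submodule.span ℂ
          ((fun j : Fin n → Fin 2 => (Pi.single j 1 : (Fin n → Fin 2) → ℂ)) ''
            {j | j ⟨0, by omega⟩ = 0 ∧ Even (hammingWt j)}) ∧
      P * tpow sigmaX n * P = 0 ∧ P * tpow sigmaY n * P = 0 ∧
      P * tpow sigmaZ n * P = P) := by
    refine ⟨Matrix.diagonal (dfun n h0), ?_, ?_, ?_, ?_, ?_, ?_, ?_⟩
    · -- Hermitian
      have hstar : star (dfun n h0) = dfun n h0 := by
        funext j
        by_cases h : pset n h0 j <;> simp [dfun, h]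
      rw [Matrix.IsHermitian, Matrix.diagonal_conjTranspose, hstar]
    · -- idempotent
      have hdd : (fun i => dfun n h0 i * dfun n h0 i) = dfun n h0 := by
        funext j
        by_cases h : pset n h0 j <;> simp [dfun, h]
      rw [Matrix.diagonal_mul_diagonal]
      exact congrArg Matrix.diagonal hdd
    · -- rank
      have hfil : (Finset.univ.filter fun j => dfun n h0 j ≠ 0) =
          Finset.univ.filter (pset n h0) :=
        Finset.filter_congr fun j _ => by
          by_cases h : pset n h0 j <;> simp [dfun, h]
      rw [Matrix.rank_diagonal, Fintype.card_subtype, hfil, pset_count n hn h0]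
    · -- range
      show LinearMap.range (Matrix.diagonal (dfun n h0)).mulVecLin =
        Submodule.span ℂ
          ((fun j : Fin n → Fin 2 => (Pi.single j 1 : (Fin n → Fin 2) → ℂ)) ''
            setOf (pset n h0))
      apply le_antisymm
      · rintro w ⟨v, rfl⟩
        have hsum : ((Matrix.diagonal (dfun n h0)).mulVecLin v : (Fin n → Fin 2) → ℂ) =
            ∑ j, (Matrix.diagonal (dfun n h0)).mulVecLin v j •
              (Pi.single j 1 : (Fin n → Fin 2) → ℂ) := by
          funext k
          rw [Finset.sum_apply]
          simp [Pi.single_apply]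
        rw [hsum]
        refine Submodule.sum_mem _ fun j _ => ?_
        by_cases h : pset n h0 j
        · exact Submodule.smul_mem _ _ (Submodule.subset_span ⟨j, h, rfl⟩)
        · have hz : (Matrix.diagonal (dfun n h0)).mulVecLin v j = 0 := by
            rw [Matrix.mulVecLin_apply, Matrix.mulVec_diagonal, dfun_neg h, zero_mul]
          rw [hz, zero_smul]
          exact Submodule.zero_mem _
      · rw [Submodule.span_le]
        rintro w ⟨j, hj, rfl⟩
        have hpj : pset n h0 j := hj
        refine ⟨Pi.single j 1, ?_⟩
        rw [Matrix.mulVecLin_apply]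
        funext k
        rw [Matrix.mulVec_diagonal]
        by_cases hk : k = j
        · subst hk
          rw [dfun_pos hpj, one_mul]
        · simp [Pi.single_eq_of_ne hk]
    · -- X
      ext j k
      rw [Matrix.mul_diagonal, Matrix.diagonal_mul]
      by_cases hj : pset n h0 j
      · by_cases hk : pset n h0 k
        · have hx : tpow sigmaX n j k = 0 := by
            unfold tpow
            rw [Matrix.of_apply]
            refine Finset.prod_eq_zero (Finset.mem_univ ⟨0, h0⟩) ?_
            rw [hj.1, hk.1, sigmaX00]
          simp [hx]
        · simp [dfun_neg hk]
      · simp [dfun_neg hj]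
    · -- Y
      ext j k
      rw [Matrix.mul_diagonal, Matrix.diagonal_mul]
      by_cases hj : pset n h0 j
      · by_cases hk : pset n h0 k
        · have hy : tpow sigmaY n j k = 0 := by
            unfold tpow
            rw [Matrix.of_apply]
            refine Finset.prod_eq_zero (Finset.mem_univ ⟨0, h0⟩) ?_
            rw [hj.1, hk.1, sigmaY00]
          simp [hy]
        · simp [dfun_neg hk]
      · simp [dfun_neg hj]
    · -- Z
      ext j k
      rw [Matrix.mul_diagonal, Matrix.diagonal_mul]
      by_cases hjk : j = k
      · subst hjk
        rw [Matrix.diagonal_apply_eq]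
        by_cases hj : pset n h0 j
        · have hz : tpow sigmaZ n j j = 1 := by
            unfold tpow
            rw [Matrix.of_apply]
            have hcongr : ∀ i : Fin n, sigmaZ (j i) (j i) = if j i = 1 then (-1 : ℂ) else 1 :=
              fun i => sigmaZ_diag (j i)
            rw [Finset.prod_congr rfl fun i _ => hcongr i, Finset.prod_ite,
              Finset.prod_const, Finset.prod_const, one_pow, mul_one]
            exact Even.neg_one_pow hj.2
          rw [hz, dfun_pos hj]
          norm_num
        · rw [dfun_neg hj]
          ring
      · rw [Matrix.diagonal_apply_ne _ hjk]
        have hz : tpow sigmaZ n j k = 0 := by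
          unfold tpow
          rw [Matrix.of_apply]
          obtain ⟨i, hi⟩ := Function.ne_iff.mp hjk
          exact Finset.prod_eq_zero (Finset.mem_univ i) (sigmaZ_off hi)
        simp [hz]
  refine ⟨main, ?_⟩
  obtain ⟨P, h1, h2, h3, _, h5, h6, h7⟩ := main
  exact ⟨P, h1, h2, h3, by simpa using h5, by simpa using h6, by simpa using h7⟩
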